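/- Let R be a commutative ring, equip the free algebra R⟨X₁,…,Xₙ⟩ with a weight ℕ-gradation determined by positive integer degrees deg Xᵢ = nᵢ, let ≺ be an ℕ-graded monomial ordering on the standard monomial basis B, and let G be a monic Gröbner basis of the ideal I = ⟨G⟩. If the monomial algebra R⟨X₁,…,Xₙ⟩/⟨LM(G)⟩ is left Noetherian (Noetherian as a left module over itself), then both R⟨X₁,…,Xₙ⟩/⟨LH(G)⟩ and A = R⟨X₁,…,Xₙ⟩/I are left Noetherian. -/

import Mathlib

noncomputable section
open MonoidAlgebra
open scoped Classical

/-- Words in the alphabet `X_1, ..., X_n`: the standard monomial basis `B`. -/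
abbrev Word (n : ℕ) : Type := FreeMonoid (Fin n)

/-- The free `R`-algebra `R⟨X_1, ..., X_n⟩`, realized as the monoid algebra of the
free monoid on `n` letters over `R`. -/
abbrev FreeAlg (R : Type) [CommRing R] (n : ℕ) : Type := MonoidAlgebra R (Word n)

variable {R : Type} [CommRing R] {n : ℕ}

/-- The monomial (word) `w` viewed as an element of the free algebra. -/
def mono (R : Type) [CommRing R] {n : ℕ} (w : Word n) : FreeAlg R n :=
  MonoidAlgebra.of R (Word n) w

/-- A monomial ordering: a well-ordering on words compatible with two-sided multiplication. -/
def IsMonomialOrder (n : ℕ) [LinearOrder (Word n)] : Prop :=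
  WellFoundedLT (Word n) ∧ ∀ w u v s : Word n, u < v → w * u * s < w * v * s

/-- The leading monomial of `f` (with junk value `1` for `f = 0`). -/
def LMon [LinearOrder (Word n)] (f : FreeAlg R n) : Word n :=
  if h : f = 0 then 1 else f.coeff.support.max' (Finsupp.support_nonempty_iff.mpr (MonoidAlgebra.coeff_eq_zero.not.mpr h))

/-- The leading coefficient of `f`. -/
def LCoef [LinearOrder (Word n)] (f : FreeAlg R n) : R := f.coeff (LMon f)

/-- `f` is monic: it is nonzero and its leading coefficient is `1`. -/
def IsMonic [LinearOrder (Word n)] (f : FreeAlg R n) : Prop := f ≠ 0 ∧ LCoef f = 1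

/-- `v` divides `u` as words: `u = w * v * s` for some words `w, s`. -/
def MDvd {n : ℕ} (v u : Word n) : Prop := ∃ w s : Word n, u = w * v * s

/-- `G` is a monic Gröbner basis of the two-sided ideal `I`: every element of `G` is monic,
and the leading monomial of every nonzero element of `I` is divisible by the leading
monomial of some element of `G`. -/
def IsMonicGB [LinearOrder (Word n)] (G : Set (FreeAlg R n))
    (I : TwoSidedIdeal (FreeAlg R n)) : Prop :=
  (∀ g ∈ G, IsMonic g) ∧ ∀ f ∈ I, f ≠ 0 → ∃ g ∈ G, MDvd (LMon g) (LMon f)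

/-- The set `LM(S)` of leading monomials of the nonzero elements of `S`. -/
def LMset [LinearOrder (Word n)] (S : Set (FreeAlg R n)) : Set (Word n) :=
  {w | ∃ f ∈ S, f ≠ 0 ∧ LMon f = w}

/-- The weight degree of a word, for the weights `deg Xᵢ = d i`. -/
def wdeg {n : ℕ} (d : Fin n → ℕ) (w : Word n) : ℕ := ((FreeMonoid.toList w).map d).sum

/-- The maximal weight degree occurring in `f`. -/
def maxdeg (d : Fin n → ℕ) (f : FreeAlg R n) : ℕ := f.coeff.support.sup (wdeg d)

/-- The ℕ-leading homogeneous element `LH(f)` of `f`: the sum of the terms of `f` of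
maximal weight degree. -/
def LH (d : Fin n → ℕ) (f : FreeAlg R n) : FreeAlg R n :=
  ∑ w ∈ f.coeff.support.filter (fun w => wdeg d w = maxdeg d f), MonoidAlgebra.single w (f.coeff w)

/-- The set `LH(S)` of leading homogeneous elements of the nonzero elements of `S`. -/
def LHset (d : Fin n → ℕ) (S : Set (FreeAlg R n)) : Set (FreeAlg R n) :=
  {x | ∃ f ∈ S, f ≠ 0 ∧ x = LH d f}

/-- An ℕ-graded monomial ordering with respect to the weights `d`: a monomial ordering
such that words of smaller degree are smaller. -/
def IsGradedMonomialOrder {n : ℕ} (d : Fin n → ℕ) [LinearOrder (Word n)] : Prop :=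
  IsMonomialOrder n ∧ ∀ u v : Word n, wdeg d u < wdeg d v → u < v

/-- The quotient ring of the free algebra by a two-sided ideal. -/
abbrev QuotRing (I : TwoSidedIdeal (FreeAlg R n)) : Type := I.ringCon.Quotient

/-! ### Auxiliary development -/

section Aux
set_option linter.unusedSectionVars false

variable [LinearOrder (Word n)]

/-- The leading term of `f`. -/
def LTerm (f : FreeAlg R n) : FreeAlg R n := MonoidAlgebra.single (LMon f) (LCoef f)

lemma lmon_mem {f : FreeAlg R n} (hf : f ≠ 0) : LMon f ∈ f.coeff.support := by
  rw [LMon, dif_neg hf]; exact f.coeff.support.max'_mem _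

lemma le_lmon {f : FreeAlg R n} {w : Word n} (hw : w ∈ f.coeff.support) : w ≤ LMon f := by
  have hf : f ≠ 0 := by rintro rfl; simp at hw
  rw [LMon, dif_neg hf]; exact f.coeff.support.le_max' _ hw

lemma lcoef_ne_zero {f : FreeAlg R n} (hf : f ≠ 0) : LCoef f ≠ 0 := by
  have := lmon_mem hf; rwa [Finsupp.mem_support_iff] at this

lemma mul_le_mul_words (hord : IsMonomialOrder n) {u v : Word n} (w s : Word n) (h : u ≤ v) :
    w * u * s ≤ w * v * s := by
  rcases lt_or_eq_of_le h with h | rfl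
  · exact le_of_lt (hord.2 w u v s h)
  · exact le_rfl

lemma word_mul_inj (u s : Word n) : Function.Injective (fun v : Word n => u * v * s) := by
  intro a b hab
  simp only at hab
  exact mul_left_cancel (mul_right_cancel hab)

lemma mono_mul_mono (u s : Word n) (f : FreeAlg R n) :
    mono R u * f * mono R s = MonoidAlgebra.mapDomain (fun v => u * v * s) f := by
  induction f using MonoidAlgebra.induction_linear with
  | zero => simp [mono]
  | add a b ha hb => rw [mul_add, add_mul, ha, hb, MonoidAlgebra.mapDomain_add]
  | single w c =>
      rw [mono, mono, MonoidAlgebra.of_apply, MonoidAlgebra.of_apply]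
      rw [MonoidAlgebra.single_mul_single, MonoidAlgebra.single_mul_single,
        MonoidAlgebra.mapDomain_single]
      simp

lemma apply_mono_mul (u s : Word n) (f : FreeAlg R n) :
    (mono R u * f * mono R s).coeff (u * LMon f * s) = LCoef f := by
  rw [mono_mul_mono]
  change (Finsupp.mapDomain (fun v => u * v * s) f.coeff) (u * LMon f * s) = _
  rw [Finsupp.mapDomain_apply (word_mul_inj u s)]; rfl

lemma support_mono_mul {u s : Word n} {f : FreeAlg R n} {w : Word n}
    (hw : w ∈ (mono R u * f * mono R s).coeff.support) : ∃ v ∈ f.coeff.support, w = u * v * s := by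
  rw [mono_mul_mono] at hw
  change w ∈ (Finsupp.mapDomain (fun v => u * v * s) f.coeff).support at hw
  have := Finsupp.mapDomain_support hw
  rw [Finset.mem_image] at this
  obtain ⟨v, hv, rfl⟩ := this
  exact ⟨v, hv, rfl⟩

/-- Monomials divisible by an element of `T`. -/
def Dset {n : ℕ} (T : Set (Word n)) : Set (Word n) := {m | ∃ t ∈ T, MDvd t m}

omit [LinearOrder (Word n)] in
lemma dset_mul_left {T : Set (Word n)} {a b : Word n} (hb : b ∈ Dset T) : a * b ∈ Dset T := by
  obtain ⟨t, ht, w, s, rfl⟩ := hb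
  exact ⟨t, ht, a * w, s, by rw [mul_assoc, mul_assoc, mul_assoc]⟩

omit [LinearOrder (Word n)] in
lemma dset_mul_right {T : Set (Word n)} {a b : Word n} (ha : a ∈ Dset T) : a * b ∈ Dset T := by
  obtain ⟨t, ht, w, s, rfl⟩ := ha
  exact ⟨t, ht, w, s * b, by simp [mul_assoc]⟩

/-- The two-sided ideal of elements supported on divisible monomials. -/
def Kideal (R : Type) [CommRing R] {n : ℕ} (T : Set (Word n)) : TwoSidedIdeal (FreeAlg R n) :=
  TwoSidedIdeal.mk' {f : FreeAlg R n | ∀ w ∈ f.coeff.support, w ∈ Dset T}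
    (by simp)
    (by
      intro x y hx hy w hw
      rw [MonoidAlgebra.coeff_add] at hw
      have := Finsupp.support_add hw
      rw [Finset.mem_union] at this
      rcases this with h | h
      · exact hx _ h
      · exact hy _ h)
    (by intro x hx w hw; rw [MonoidAlgebra.coeff_neg, Finsupp.support_neg] at hw; exact hx _ hw)
    (by
      intro x y hy w hw
      have := MonoidAlgebra.support_coeff_mul_subset x y hw
      rw [Finset.mem_mul] at this
      obtain ⟨a, ha, b, hb, rfl⟩ := this
      exact dset_mul_left (hy _ hb))
    (by
      intro x y hx w hw
      have := MonoidAlgebra.support_coeff_mul_subset x y hw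
      rw [Finset.mem_mul] at this
      obtain ⟨a, ha, b, hb, rfl⟩ := this
      exact dset_mul_right (hx _ ha))

lemma span_support_dset {T : Set (Word n)} {f : FreeAlg R n}
    (hf : f ∈ TwoSidedIdeal.span (mono R '' T)) : ∀ w ∈ f.coeff.support, w ∈ Dset T := by
  have h := TwoSidedIdeal.mem_span_iff.mp hf (Kideal R T) ?_
  · rwa [Kideal, TwoSidedIdeal.mem_mk'] at h
  · rintro x ⟨t, ht, rfl⟩
    rw [SetLike.mem_coe, Kideal, TwoSidedIdeal.mem_mk']
    intro w hw
    have : w ∈ Finsupp.support (Finsupp.single t (1 : R)) := hw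
    rw [Finsupp.mem_support_iff, Finsupp.single_apply_ne_zero] at this
    exact this.1 ▸ ⟨t, ht, 1, 1, by simp⟩

omit [LinearOrder (Word n)] in
lemma mk'_eq_zero_iff {A : Type*} [Ring A] (I : TwoSidedIdeal A) (x : A) :
    I.ringCon.mk' x = 0 ↔ x ∈ I := by
  have : (0 : I.ringCon.Quotient) = I.ringCon.mk' 0 := rfl
  rw [this]
  change (x : I.ringCon.Quotient) = (0 : A) ↔ _
  rw [RingCon.eq, I.rel_iff, sub_zero]

omit [LinearOrder (Word n)] in
lemma mk'_surjective {A : Type*} [Ring A] (I : TwoSidedIdeal A) :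
    Function.Surjective I.ringCon.mk' := fun q => Quotient.inductionOn' q fun x => ⟨x, rfl⟩

omit [LinearOrder (Word n)] in
lemma lift_span {A : Type*} [Ring A] (I : TwoSidedIdeal A) (s : Set A) (x : A)
    (hx : I.ringCon.mk' x ∈ Ideal.span (I.ringCon.mk' '' s)) :
    ∃ a ∈ Submodule.span A s, x - a ∈ I := by
  rw [Ideal.span, Submodule.mem_span_set] at hx
  obtain ⟨c, hsupp, hsum⟩ := hx
  have ht : ∀ q ∈ c.support, ∃ t, t ∈ s ∧ I.ringCon.mk' t = q := by
    intro q hq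
    obtain ⟨t, ht, hte⟩ := hsupp hq
    exact ⟨t, ht, hte⟩
  choose t htmem hteq using ht
  have hp : ∀ q : I.ringCon.Quotient, ∃ p, I.ringCon.mk' p = q := mk'_surjective I
  choose p hpeq using hp
  refine ⟨∑ q ∈ c.support.attach, p (c q.1) * t q.1 q.2, ?_, ?_⟩
  · exact Submodule.sum_mem _ fun q _ => by
      simpa [smul_eq_mul] using
        Submodule.smul_mem _ (p (c q.1)) (Submodule.subset_span (htmem q.1 q.2))
  · rw [← mk'_eq_zero_iff I, map_sub, map_sum, sub_eq_zero, ← hsum]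
    rw [Finsupp.sum, ← Finset.sum_attach c.support (fun q => c q • q)]
    exact Finset.sum_congr rfl fun q _ => by
      rw [map_mul, hpeq, hteq q.1 q.2, smul_eq_mul]

lemma per_term (hord : IsMonomialOrder n) (L : Ideal (FreeAlg R n)) (m : Word n)
    (p h : FreeAlg R n) (hh : h ∈ L) :
    ∃ y ∈ L, y.coeff m = (p * LTerm h).coeff m ∧ ∀ w ∈ y.coeff.support, w ≤ m := by
  by_cases hex : ∃ u : Word n, u * LMon h = m
  · obtain ⟨u, hu⟩ := hex
    refine ⟨MonoidAlgebra.single u (p.coeff u) * h, ?_, ?_, ?_⟩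
    · simpa [smul_eq_mul] using Submodule.smul_mem L (MonoidAlgebra.single u (p.coeff u)) hh
    · have h1 : (MonoidAlgebra.single u (p.coeff u) * h).coeff m = p.coeff u * h.coeff (LMon h) :=
        MonoidAlgebra.coeff_single_mul_eq_mul_coeff (LMon h) (fun a _ =>
          ⟨fun hxa => mul_left_cancel (hu ▸ hxa), fun hxa => hxa ▸ hu⟩)
      have h2 : (p * MonoidAlgebra.single (LMon h) (LCoef h)).coeff m = p.coeff u * LCoef h :=
        MonoidAlgebra.coeff_mul_single_eq_coeff_mul u (fun a _ =>
          ⟨fun hxa => mul_right_cancel (hu ▸ hxa), fun hxa => hxa ▸ hu⟩)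
      rw [h1, show LTerm h = MonoidAlgebra.single (LMon h) (LCoef h) from rfl, h2, LCoef]
    · intro w hw
      have := MonoidAlgebra.support_coeff_mul_subset _ h hw
      rw [Finset.mem_mul] at this
      obtain ⟨a, ha, b, hb, rfl⟩ := this
      have ha' : a = u := Finset.mem_singleton.mp (Finsupp.support_single_subset ha)
      subst ha'
      calc a * b = a * b * 1 := (mul_one _).symm
        _ ≤ a * LMon h * 1 := mul_le_mul_words hord _ _ (le_lmon hb)
        _ = m := by rw [mul_one, hu]
  · refine ⟨0, Submodule.zero_mem L, ?_, by simp⟩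
    rw [MonoidAlgebra.coeff_zero, Finsupp.coe_zero, Pi.zero_apply, LTerm]
    exact (MonoidAlgebra.mul_single_apply_of_not_exists_mul _ p
      (fun ⟨d, hd⟩ => hex ⟨d, hd.symm⟩)).symm

lemma reduce_span (hord : IsMonomialOrder n) (L : Ideal (FreeAlg R n)) (m : Word n)
    {a : FreeAlg R n}
    (ha : a ∈ Submodule.span (FreeAlg R n) (LTerm '' (L : Set (FreeAlg R n)))) :
    ∃ y ∈ L, y.coeff m = a.coeff m ∧ ∀ w ∈ y.coeff.support, w ≤ m := by
  rw [Submodule.mem_span_set] at ha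
  obtain ⟨c, hsupp, hsum⟩ := ha
  have ht : ∀ z ∈ c.support, ∃ h, h ∈ L ∧ LTerm h = z := by
    intro z hz; obtain ⟨h, hh, hhe⟩ := hsupp hz; exact ⟨h, hh, hhe⟩
  choose t htmem hteq using ht
  have hy : ∀ z : c.support, ∃ y ∈ L, y.coeff m = (c z.1 * z.1).coeff m ∧ ∀ w ∈ y.coeff.support, w ≤ m := by
    intro z
    have := per_term hord L m (c z.1) (t z.1 z.2) (htmem z.1 z.2)
    rwa [hteq z.1 z.2] at this
  choose y hymem hyval hysupp using hy
  refine ⟨∑ z ∈ c.support.attach, y z, Submodule.sum_mem _ fun z _ => hymem z, ?_, ?_⟩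
  · have h1 : (∑ z ∈ c.support.attach, y z).coeff m = ∑ z ∈ c.support.attach, (y z).coeff m := by
      rw [MonoidAlgebra.coeff_sum]; exact Finset.sum_apply' m
    rw [h1, ← hsum, Finsupp.sum, ← Finset.sum_attach c.support (fun z => c z • z)]
    have h2 : (∑ z ∈ c.support.attach, c z.1 • z.1).coeff m
        = ∑ z ∈ c.support.attach, (c z.1 • (z.1 : FreeAlg R n)).coeff m := by
      rw [MonoidAlgebra.coeff_sum]; exact Finset.sum_apply' m
    rw [h2]
    exact Finset.sum_congr rfl fun z _ => by rw [hyval z, smul_eq_mul]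
  · intro w hw
    rw [Finsupp.mem_support_iff] at hw
    have h1 : (∑ z ∈ c.support.attach, y z).coeff w = ∑ z ∈ c.support.attach, (y z).coeff w := by
      rw [MonoidAlgebra.coeff_sum]; exact Finset.sum_apply' w
    rw [h1] at hw
    obtain ⟨z, _, hz⟩ := Finset.exists_ne_zero_of_sum_ne_zero hw
    exact hysupp z w (Finsupp.mem_support_iff.mpr hz)

lemma key_reduction (hord : IsMonomialOrder n) (S : Set (FreeAlg R n))
    (hmonic : ∀ g ∈ S, IsMonic g) {L L' : Ideal (FreeAlg R n)}
    (hI : ∀ x ∈ TwoSidedIdeal.span S, x ∈ L) (hLL : L ≤ L')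
    (hphi :
      Ideal.span ((TwoSidedIdeal.span (mono R '' LMset S)).ringCon.mk' ''
          (LTerm '' (L' : Set (FreeAlg R n)))) ≤
      Ideal.span ((TwoSidedIdeal.span (mono R '' LMset S)).ringCon.mk' ''
          (LTerm '' (L : Set (FreeAlg R n))))) :
    L' ≤ L := by
  set M := TwoSidedIdeal.span (mono R '' LMset S) with hM
  by_contra hc
  have hex : ∃ f, f ∈ L' ∧ f ∉ L := by
    by_contra h
    push_neg at h
    exact hc fun x hx => h x hx
  set W : Set (Word n) := {w | ∃ f, f ∈ L' ∧ f ∉ L ∧ LMon f = w} with hW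
  have hWne : W.Nonempty := by
    obtain ⟨f, hf1, hf2⟩ := hex
    exact ⟨LMon f, f, hf1, hf2, rfl⟩
  set m := hord.1.wf.min W hWne with hm
  obtain ⟨f, hfL', hfL, hfm⟩ := hord.1.wf.min_mem W hWne
  have hfm2 : LMon f = m := hfm
  have hf0 : f ≠ 0 := fun h => hfL (h ▸ Submodule.zero_mem L)
  -- the key claim
  have claim : ∃ y ∈ L, y.coeff m = f.coeff m ∧ ∀ w ∈ y.coeff.support, w ≤ m := by
    by_cases hdiv : m ∈ Dset (LMset S)
    · obtain ⟨t, ⟨g, hgS, hg0, hgt⟩, w, s, hwts⟩ := hdiv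
      refine ⟨MonoidAlgebra.single w (f.coeff m) * g * mono R s, ?_, ?_, ?_⟩
      · apply hI
        exact TwoSidedIdeal.mul_mem_right _ _ _
          (TwoSidedIdeal.mul_mem_left _ _ _ (TwoSidedIdeal.subset_span hgS))
      · have hsm : MonoidAlgebra.single w (f.coeff m) * g * mono R s
            = (f.coeff m) • (mono R w * g * mono R s) := by
          rw [show (MonoidAlgebra.single w (f.coeff m) : FreeAlg R n)
              = (f.coeff m) • (mono R w) by rw [mono, MonoidAlgebra.of_apply]; simp,
            smul_mul_assoc, smul_mul_assoc]
        rw [hsm, MonoidAlgebra.coeff_smul, Finsupp.smul_apply, show m = w * LMon g * s by rw [hwts, hgt],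
          apply_mono_mul, (hmonic g hgS).2, smul_eq_mul, mul_one,
          ← show m = w * LMon g * s by rw [hwts, hgt]]
      · intro w' hw'
        have hsm : MonoidAlgebra.single w (f.coeff m) * g * mono R s
            = (f.coeff m) • (mono R w * g * mono R s) := by
          rw [show (MonoidAlgebra.single w (f.coeff m) : FreeAlg R n)
              = (f.coeff m) • (mono R w) by rw [mono, MonoidAlgebra.of_apply]; simp,
            smul_mul_assoc, smul_mul_assoc]
        rw [hsm, MonoidAlgebra.coeff_smul] at hw'
        have hw'' := Finsupp.support_smul hw'
        obtain ⟨v, hv, rfl⟩ := support_mono_mul hw''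
        calc w * v * s ≤ w * LMon g * s := mul_le_mul_words hord _ _ (le_lmon hv)
          _ = m := by rw [hwts, hgt]
    · have hgen : M.ringCon.mk' (LTerm f) ∈
          Ideal.span (M.ringCon.mk' '' (LTerm '' (L' : Set (FreeAlg R n)))) :=
        Ideal.subset_span ⟨LTerm f, ⟨f, hfL', rfl⟩, rfl⟩
      obtain ⟨a, haspan, haI⟩ := lift_span M _ _ (hphi hgen)
      have hzm : (LTerm f - a).coeff m = 0 := by
        by_contra hne
        exact hdiv (span_support_dset haI m (Finsupp.mem_support_iff.mpr hne))
      have ham : a.coeff m = f.coeff m := by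
        have : (LTerm f).coeff m = f.coeff m := by
          rw [LTerm, LCoef, hfm2, MonoidAlgebra.coeff_single, Finsupp.single_eq_same]
        rw [MonoidAlgebra.coeff_sub, Finsupp.sub_apply, sub_eq_zero] at hzm
        rw [← hzm, this]
      obtain ⟨y, hy1, hy2, hy3⟩ := reduce_span hord L m haspan
      exact ⟨y, hy1, by rw [hy2, ham], hy3⟩
  obtain ⟨y, hyL, hym, hysupp⟩ := claim
  have hf2L' : f - y ∈ L' := Submodule.sub_mem L' hfL' (hLL hyL)
  have hf2L : f - y ∉ L := fun h => hfL (by simpa using Submodule.add_mem L h hyL)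
  have hf20 : f - y ≠ 0 := fun h => hf2L (h ▸ Submodule.zero_mem L)
  have hsub : ∀ w ∈ (f - y).coeff.support, w < m := by
    intro w hw
    rw [MonoidAlgebra.coeff_sub] at hw
    have hle : w ≤ m := by
      have hmem := Finsupp.support_sub hw
      rw [Finset.mem_union] at hmem
      rcases hmem with h | h
      · exact hfm2 ▸ le_lmon h
      · exact hysupp w h
    rcases lt_or_eq_of_le hle with h | rfl
    · exact h
    · exfalso
      rw [Finsupp.mem_support_iff, Finsupp.sub_apply] at hw
      exact hw (by rw [hym, sub_self])
  have hlt : LMon (f - y) < m := hsub _ (lmon_mem hf20)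
  exact hord.1.wf.not_lt_min W ⟨f - y, hf2L', hf2L, rfl⟩ hlt

lemma main_noeth (hord : IsMonomialOrder n) (S : Set (FreeAlg R n))
    (hmonic : ∀ g ∈ S, IsMonic g)
    (hN : IsNoetherianRing (QuotRing (TwoSidedIdeal.span (mono R '' LMset S)))) :
    IsNoetherianRing (QuotRing (TwoSidedIdeal.span S)) := by
  set M := TwoSidedIdeal.span (mono R '' LMset S) with hMdef
  set I := TwoSidedIdeal.span S with hIdef
  set π : FreeAlg R n →+* QuotRing I := I.ringCon.mk' with hpi
  set Ψ : Ideal (QuotRing I) → Ideal (QuotRing M) := fun J =>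
    Ideal.span (M.ringCon.mk' '' (LTerm ''
      ((Ideal.comap π J : Ideal (FreeAlg R n)) : Set (FreeAlg R n)))) with hPsi
  have hQ : WellFoundedGT (Ideal (QuotRing M)) := isNoetherian_iff'.mp hN
  have hstrict : ∀ J J' : Ideal (QuotRing I), J < J' → Ψ J < Ψ J' := by
    intro J J' hJJ
    have hle : Ψ J ≤ Ψ J' :=
      Ideal.span_mono (Set.image_mono (Set.image_mono (Ideal.comap_mono hJJ.le)))
    refine lt_of_le_of_ne hle fun heq => ?_
    have hkey : Ideal.comap π J' ≤ Ideal.comap π J := by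
      apply key_reduction hord S hmonic
      · intro x hx
        simp only [Ideal.mem_comap]
        rw [show π x = 0 from (mk'_eq_zero_iff I x).mpr hx]
        exact Submodule.zero_mem J
      · exact Ideal.comap_mono hJJ.le
      · exact le_of_eq heq.symm
    have hcontr : J' ≤ J := by
      intro q hq
      obtain ⟨x, rfl⟩ := mk'_surjective I q
      exact hkey hq
    exact hJJ.not_ge hcontr
  rw [isNoetherianRing_iff, isNoetherian_iff']
  exact ⟨Subrelation.wf (fun {a b} h => hstrict b a h) (InvImage.wf Ψ hQ.wf)⟩

lemma LH_apply (d : Fin n → ℕ) (f : FreeAlg R n) (w : Word n) :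
    (LH d f).coeff w = if w ∈ f.coeff.support.filter (fun w => wdeg d w = maxdeg d f) then f.coeff w else 0 := by
  rw [LH, MonoidAlgebra.coeff_sum, Finset.sum_apply']
  simp_rw [MonoidAlgebra.coeff_single, Finsupp.single_apply]
  exact Finset.sum_ite_eq' _ w _

lemma wdeg_lmon {d : Fin n → ℕ} (hg : IsGradedMonomialOrder d) {f : FreeAlg R n} (hf : f ≠ 0) :
    wdeg d (LMon f) = maxdeg d f := by
  apply le_antisymm (Finset.le_sup (lmon_mem hf))
  obtain ⟨w0, hw0, hsup⟩ :=
    Finset.exists_mem_eq_sup _ (Finsupp.support_nonempty_iff.mpr (MonoidAlgebra.coeff_eq_zero.not.mpr hf)) (wdeg d)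
  rw [hsup]
  by_contra h
  push_neg at h
  exact absurd (hg.2 _ _ h) (not_lt_of_ge (le_lmon hw0))

lemma LH_props {d : Fin n → ℕ} (hg : IsGradedMonomialOrder d) {f : FreeAlg R n} (hf : f ≠ 0) :
    LH d f ≠ 0 ∧ LMon (LH d f) = LMon f ∧ LCoef (LH d f) = LCoef f := by
  have hval : (LH d f).coeff (LMon f) = f.coeff (LMon f) := by
    rw [LH_apply, if_pos (Finset.mem_filter.mpr ⟨lmon_mem hf, wdeg_lmon hg hf⟩)]
  have hne : LH d f ≠ 0 := by
    intro h
    apply lcoef_ne_zero hf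
    rw [LCoef, ← hval, h]; simp
  have hmem : LMon f ∈ (LH d f).coeff.support :=
    Finsupp.mem_support_iff.mpr (by rw [hval]; exact lcoef_ne_zero hf)
  have hsub : ∀ w ∈ (LH d f).coeff.support, w ∈ f.coeff.support := by
    intro w hw
    rw [Finsupp.mem_support_iff, LH_apply] at hw
    split_ifs at hw with h
    · exact (Finset.mem_filter.mp h).1
    · exact absurd rfl hw
  have hlm : LMon (LH d f) = LMon f :=
    le_antisymm (le_lmon (hsub _ (lmon_mem hne))) (le_lmon hmem)
  exact ⟨hne, hlm, by rw [LCoef, hlm, hval, LCoef]⟩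

lemma lmset_LH {d : Fin n → ℕ} (hg : IsGradedMonomialOrder d) (G : Set (FreeAlg R n)) :
    LMset (LHset d G) = LMset G := by
  ext w
  constructor
  · rintro ⟨f', ⟨g, hgG, hg0, rfl⟩, hne, rfl⟩
    exact ⟨g, hgG, hg0, (LH_props hg hg0).2.1.symm⟩
  · rintro ⟨g, hgG, hg0, rfl⟩
    exact ⟨LH d g, ⟨g, hgG, hg0, rfl⟩, (LH_props hg hg0).1, (LH_props hg hg0).2.1⟩

end Aux

/-- If `G` is a monic Gröbner basis of `I = ⟨G⟩` with respect to an
ℕ-graded monomial ordering and the monomial algebra `R⟨X⟩/⟨LM(G)⟩` is left Noetherian, then so are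
`R⟨X⟩/⟨LH(G)⟩` and `A = R⟨X⟩/I`. -/
theorem noetherian_lifts [LinearOrder (Word n)]
    (d : Fin n → ℕ) (hd : ∀ i, 0 < d i) (hord : IsGradedMonomialOrder d)
    (G : Set (FreeAlg R n)) (hGB : IsMonicGB G (TwoSidedIdeal.span G))
    (hN : IsNoetherianRing (QuotRing (TwoSidedIdeal.span (mono R '' LMset G)))) :
    IsNoetherianRing (QuotRing (TwoSidedIdeal.span (LHset d G))) ∧
    IsNoetherianRing (QuotRing (TwoSidedIdeal.span G)) := by
  constructor
  · have hmonic : ∀ g' ∈ LHset d G, IsMonic g' := by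
      rintro _ ⟨g, hgG, hg0, rfl⟩
      obtain ⟨h1, h2, h3⟩ := LH_props hord hg0
      exact ⟨h1, by rw [h3, (hGB.1 g hgG).2]⟩
    apply main_noeth hord.1 _ hmonic
    rwa [lmset_LH hord G]
  · exact main_noeth hord.1 G hGB.1 hN
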